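/- Consider the random walk on {0,…,L} started at s0, with i.i.d. steps equal to +1 with probability p and −1 with probability 1−p. Fix an integer t ≥ 1 and s ∈ {0, L} with s − s0 + t even, and set r = (s − s0 + t)/2. Then the probability that the walk stays in {1,…,L−1} at all times k < t and satisfies X_t = s equals (1−p)^{t−r} p^{r} · Σ_{k∈ℤ} [C(t−1, r′+kL) − C(t−1, r′+s0+kL)], where r′ = r if s = 0 and r′ = r−1 if s = L. -/

import Mathlib

open MeasureTheory ProbabilityTheory
open scoped Classical

/-- Binomial coefficient `C(n,k)` with integer lower index `k`, equal to `0`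
unless `0 ≤ k ≤ n`. -/
def Cb (n : ℕ) (k : ℤ) : ℤ := if 0 ≤ k ∧ k ≤ (n : ℤ) then (n.choose k.toNat : ℤ) else 0



lemma Cb_eq_zero {n : ℕ} {k : ℤ} (h : ¬ (0 ≤ k ∧ k ≤ (n:ℤ))) : Cb n k = 0 := by
  simp [Cb, h]

lemma Cb_zero_left (k : ℤ) : Cb 0 k = if k = 0 then 1 else 0 := by
  rcases eq_or_ne k 0 with rfl | h
  · simp [Cb]
  · simp only [Cb, if_neg h]
    split
    · next hc => exfalso; exact h (le_antisymm (by exact_mod_cast hc.2) hc.1)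
    · rfl

lemma Cb_pascal (n : ℕ) (k : ℤ) : Cb (n+1) k = Cb n k + Cb n (k-1) := by
  unfold Cb
  rcases le_or_gt k 0 with hk0 | hk0
  · rcases eq_or_ne k 0 with rfl | hne
    · simp; omega
    · rw [if_neg (by omega), if_neg (by omega), if_neg (by omega)]; ring
  · rcases le_or_gt k n with hkn | hkn
    · rw [if_pos ⟨by omega, by omega⟩, if_pos ⟨by omega, by omega⟩, if_pos ⟨by omega, by omega⟩]
      have h1 : k.toNat = (k-1).toNat + 1 := by omega
      rw [h1, Nat.choose_succ_succ']
      push_cast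
      ring
    · rcases eq_or_ne k (n+1) with rfl | hne
      · rw [if_pos ⟨by omega, by omega⟩, if_neg (by omega), if_pos ⟨by omega, by omega⟩]
        have : ((n:ℤ)+1-1).toNat = n := by omega
        rw [this, show ((n:ℤ)+1).toNat = n+1 by omega]
        simp
      · rw [if_neg (by omega), if_neg (by omega), if_neg (by omega)]; ring

lemma Cb_symm (n : ℕ) (k : ℤ) : Cb n k = Cb n ((n:ℤ) - k) := by
  unfold Cb
  rcases le_or_gt 0 k with hk | hk
  · rcases le_or_gt k n with hkn | hkn
    · rw [if_pos ⟨hk, hkn⟩, if_pos ⟨by omega, by omega⟩]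
      rw [show ((n:ℤ) - k).toNat = n - k.toNat by omega]
      rw [← Nat.choose_symm (by omega : k.toNat ≤ n)]
    · rw [if_neg (by omega), if_neg (by omega)]
  · rw [if_neg (by omega), if_neg (by omega)]


noncomputable def Fim (L : ℕ) (s0 : ℤ) (n : ℕ) (j : ℤ) : ℝ :=
  ∑' k : ℤ, ((Cb n (j + k * L) : ℝ) - (Cb n (j + s0 + k * L) : ℝ))

lemma mulL_cases (L : ℕ) (hL : 1 ≤ L) (k : ℤ) :
    k = 0 ∨ (1 ≤ k ∧ (L:ℤ) ≤ k * L) ∨ (k ≤ -1 ∧ k * L ≤ -(L:ℤ)) := by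
  rcases lt_trichotomy k 0 with h | h | h
  · right; right
    constructor
    · omega
    · have : (1:ℤ) ≤ L := by exact_mod_cast hL
      nlinarith
  · left; exact h
  · right; left
    constructor
    · omega
    · have : (1:ℤ) ≤ L := by exact_mod_cast hL
      nlinarith

lemma summable_cb (L : ℕ) (hL : 1 ≤ L) (n : ℕ) (m : ℤ) :
    Summable (fun k : ℤ => (Cb n (m + k * L) : ℝ)) := by
  apply summable_of_ne_finset_zero (s := Finset.Icc (-(|m| + n)) (|m| + n))
  intro k hk
  simp only [Finset.mem_Icc, not_and_or, not_le] at hk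
  have hz : ¬ (0 ≤ m + k * L ∧ m + k * L ≤ (n:ℤ)) := by
    intro ⟨h1, h2⟩
    have hkk : |k| ≤ |k * L| := by
      rw [abs_mul]
      have hL1 : (1:ℤ) ≤ |(L:ℤ)| := by
        rw [abs_of_nonneg (by positivity)]; exact_mod_cast hL
      nlinarith [abs_nonneg k]
    have hkl : |k * L| ≤ |m| + n := by
      rw [abs_le]
      have := le_abs_self m
      have := neg_abs_le m
      omega
    have := le_abs_self k
    have := neg_abs_le k
    omega
  rw [Cb_eq_zero hz]
  simp

lemma summable_cb_sub (L : ℕ) (hL : 1 ≤ L) (n : ℕ) (j s0 : ℤ) :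
    Summable (fun k : ℤ => ((Cb n (j + k * L) : ℝ) - (Cb n (j + s0 + k * L) : ℝ))) :=
  (summable_cb L hL n j).sub (summable_cb L hL n (j + s0))

lemma Fim_eq_sub (L : ℕ) (hL : 1 ≤ L) (s0 : ℤ) (n : ℕ) (j : ℤ) :
    Fim L s0 n j = (∑' k : ℤ, (Cb n (j + k * L) : ℝ)) - ∑' k : ℤ, (Cb n (j + s0 + k * L) : ℝ) :=
  Summable.tsum_sub (summable_cb L hL n j) (summable_cb L hL n (j + s0))

lemma Fim_boundary_zero (L : ℕ) (hL : 1 ≤ L) (s0 : ℤ) (n : ℕ) (j : ℤ)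
    (h : (n : ℤ) = s0 + 2 * j) : Fim L s0 n j = 0 := by
  rw [Fim_eq_sub L hL s0 n j, sub_eq_zero]
  have hterm : ∀ k : ℤ, (Cb n (j + k * L) : ℝ) = (Cb n (j + s0 + (-k) * L) : ℝ) := by
    intro k
    rw [Cb_symm n (j + k * L)]
    congr 2
    rw [h]; ring
  calc ∑' k : ℤ, (Cb n (j + k * L) : ℝ)
      = ∑' k : ℤ, (Cb n (j + s0 + (Equiv.neg ℤ k) * L) : ℝ) := tsum_congr hterm
    _ = ∑' k : ℤ, (Cb n (j + s0 + k * L) : ℝ) :=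
        (Equiv.neg ℤ).tsum_eq (fun k : ℤ => (Cb n (j + s0 + k * L) : ℝ))

lemma Fim_boundary_L (L : ℕ) (hL : 1 ≤ L) (s0 : ℤ) (n : ℕ) (j : ℤ)
    (h : (n : ℤ) = s0 + 2 * j - L) : Fim L s0 n j = 0 := by
  rw [Fim_eq_sub L hL s0 n j, sub_eq_zero]
  let e : ℤ ≃ ℤ := Function.Involutive.toPerm (fun k => -1 - k) (fun k => by simp)
  have he : ∀ k, e k = -1 - k := fun k => rfl
  have hterm : ∀ k : ℤ, (Cb n (j + k * L) : ℝ) = (Cb n (j + s0 + (e k) * L) : ℝ) := by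
    intro k
    rw [Cb_symm n (j + k * L), he k]
    congr 2
    rw [h]; ring
  calc ∑' k : ℤ, (Cb n (j + k * L) : ℝ)
      = ∑' k : ℤ, (Cb n (j + s0 + (e k) * L) : ℝ) := tsum_congr hterm
    _ = ∑' k : ℤ, (Cb n (j + s0 + k * L) : ℝ) :=
        e.tsum_eq (fun k : ℤ => (Cb n (j + s0 + k * L) : ℝ))

lemma Fim_pascal (L : ℕ) (hL : 1 ≤ L) (s0 : ℤ) (n : ℕ) (j : ℤ) :
    Fim L s0 (n + 1) j = Fim L s0 n (j - 1) + Fim L s0 n j := by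
  have hterm : ∀ k : ℤ,
      ((Cb (n+1) (j + k * L) : ℝ) - (Cb (n+1) (j + s0 + k * L) : ℝ))
        = ((Cb n ((j-1) + k * L) : ℝ) - (Cb n ((j-1) + s0 + k * L) : ℝ))
          + ((Cb n (j + k * L) : ℝ) - (Cb n (j + s0 + k * L) : ℝ)) := by
    intro k
    have h1 := Cb_pascal n (j + k * L)
    have h2 := Cb_pascal n (j + s0 + k * L)
    rw [show j + k * L - 1 = (j - 1) + k * L by ring] at h1
    rw [show j + s0 + k * L - 1 = (j - 1) + s0 + k * L by ring] at h2
    rw [h1, h2]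
    push_cast
    ring
  unfold Fim
  rw [tsum_congr hterm]
  exact Summable.tsum_add (summable_cb_sub L hL n (j-1) s0) (summable_cb_sub L hL n j s0)

lemma Fim_zero (L : ℕ) (hL : 2 ≤ L) (s0 : ℤ) (hs0 : 0 < s0) (hs0L : s0 < (L:ℤ)) (j : ℤ)
    (h0 : 0 ≤ s0 + 2 * j) (h1 : s0 + 2 * j ≤ (L:ℤ)) :
    Fim L s0 0 j = if j = 0 then 1 else 0 := by
  have hL1 : 1 ≤ L := by omega
  have hLZ : (2:ℤ) ≤ (L:ℤ) := by exact_mod_cast hL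
  rcases eq_or_ne j 0 with rfl | hj
  · rw [if_pos rfl]
    unfold Fim
    have hterm : ∀ k : ℤ, ((Cb 0 (0 + k * L) : ℝ) - (Cb 0 (0 + s0 + k * L) : ℝ))
        = if k = 0 then 1 else 0 := by
      intro k
      rw [Cb_zero_left, Cb_zero_left]
      rcases mulL_cases L hL1 k with rfl | ⟨hk, hkL⟩ | ⟨hk, hkL⟩
      · simp; omega
      · rw [if_neg (by omega), if_neg (by omega), if_neg (by omega)]
        simp
      · rw [if_neg (by omega), if_neg (by omega), if_neg (by omega)]
        simp
    rw [tsum_congr hterm]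
    exact tsum_ite_eq (0 : ℤ) (fun _ => (1 : ℝ))
  · rw [if_neg hj]
    unfold Fim
    have hterm : ∀ k : ℤ, ((Cb 0 (j + k * L) : ℝ) - (Cb 0 (j + s0 + k * L) : ℝ)) = 0 := by
      intro k
      rw [Cb_zero_left, Cb_zero_left]
      rcases mulL_cases L hL1 k with rfl | ⟨hk, hkL⟩ | ⟨hk, hkL⟩
      · rw [if_neg (by omega), if_neg (by omega)]; simp
      · rw [if_neg (by omega), if_neg (by omega)]; simp
      · rw [if_neg (by omega), if_neg (by omega)]; simp
    rw [tsum_congr hterm]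
    exact tsum_zero

def pc (L : ℕ) (s0 : ℤ) : ℕ → ℤ → ℕ
  | 0, j => if j = 0 then 1 else 0
  | (n+1), j => if 0 < s0 + 2*j - (n+1) ∧ s0 + 2*j - (n+1) < (L:ℤ)
      then pc L s0 n (j-1) + pc L s0 n j else 0

lemma pc_zero (L : ℕ) (s0 : ℤ) (j : ℤ) : pc L s0 0 j = if j = 0 then 1 else 0 := rfl

lemma pc_succ (L : ℕ) (s0 : ℤ) (n : ℕ) (j : ℤ) :
    pc L s0 (n+1) j = if 0 < s0 + 2*j - (n+1) ∧ s0 + 2*j - (n+1) < (L:ℤ)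
      then pc L s0 n (j-1) + pc L s0 n j else 0 := rfl

lemma pc_eq_Fim (L : ℕ) (hL : 2 ≤ L) (s0 : ℤ) (hs0 : 0 < s0) (hs0L : s0 < (L:ℤ)) :
    ∀ (n : ℕ) (j : ℤ), 0 ≤ s0 + 2 * j - n → s0 + 2 * j - n ≤ (L:ℤ) →
      (pc L s0 n j : ℝ) = Fim L s0 n j := by
  have hL1 : 1 ≤ L := by omega
  intro n
  induction n with
  | zero =>
    intro j h0 h1
    rw [Fim_zero L hL s0 hs0 hs0L j (by omega) (by omega)]
    rw [pc_zero]
    split <;> simp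
  | succ n ih =>
    intro j h0 h1
    by_cases hb : 0 < s0 + 2*j - (n+1) ∧ s0 + 2*j - (n+1) < (L:ℤ)
    · have hpc : pc L s0 (n+1) j = pc L s0 n (j-1) + pc L s0 n j := by
        rw [pc_succ, if_pos hb]
      rw [hpc, Fim_pascal L hL1 s0 n j]
      push_cast
      rw [ih (j-1) (by omega) (by omega), ih j (by omega) (by omega)]
    · have hpc : pc L s0 (n+1) j = 0 := by
        rw [pc_succ, if_neg hb]
      rw [hpc]
      have : s0 + 2*j - (n+1) = 0 ∨ s0 + 2*j - (n+1) = (L:ℤ) := by omega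
      rcases this with h | h
      · rw [Fim_boundary_zero L hL1 s0 (n+1) j (by push_cast; omega)]; simp
      · rw [Fim_boundary_L L hL1 s0 (n+1) j (by push_cast; omega)]; simp

/-- For the ±1 random walk on `{0,…,L}` started at `s0`, the probability
of staying in the interior `{1,…,L-1}` at all times `k < t` and being at `s ∈ {0,L}` at
time `t` is `(1-p)^(t-r) p^r` times the method-of-images path count. -/
theorem stmt_1 {Ω : Type*} [MeasurableSpace Ω] (P : Measure Ω) [IsProbabilityMeasure P]
    (L : ℕ) (hL : 2 ≤ L) (s0 : ℤ) (hs0 : 0 < s0) (hs0L : s0 < (L : ℤ))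
    (p : ℝ) (hp0 : 0 < p) (hp1 : p < 1)
    (ξ : ℕ → Ω → ℤ) (hmeas : ∀ i, Measurable (ξ i))
    (hindep : iIndepFun ξ P)
    (hplus : ∀ i, P {ω | ξ i ω = 1} = ENNReal.ofReal p)
    (hminus : ∀ i, P {ω | ξ i ω = -1} = ENNReal.ofReal (1 - p))
    (X : ℕ → Ω → ℤ) (hX : ∀ k ω, X k ω = s0 + ∑ i ∈ Finset.range k, ξ i ω)
    (t : ℕ) (ht : 1 ≤ t) (s : ℤ) (hs : s = 0 ∨ s = (L : ℤ))
    (hpar : (2 : ℤ) ∣ (s - s0 + t))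
    (r : ℤ) (hr : r = (s - s0 + t) / 2)
    (r' : ℤ) (hr' : r' = if s = 0 then r else r - 1) :
    P {ω | (∀ k < t, 0 < X k ω ∧ X k ω < (L : ℤ)) ∧ X t ω = s}
      = ENNReal.ofReal ((1 - p) ^ ((t : ℤ) - r) * p ^ r *
          ∑' k : ℤ, ((Cb (t - 1) (r' + k * L) : ℝ) - (Cb (t - 1) (r' + s0 + k * L) : ℝ))) := by
  have hL1 : 1 ≤ L := by omega
  have hpne : p ≠ 0 := ne_of_gt hp0
  have hqpos : (0:ℝ) < 1 - p := by linarith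
  have hqne : (1:ℝ) - p ≠ 0 := ne_of_gt hqpos
  -- measurability of the step events
  have hU : ∀ n : ℕ, MeasurableSet {ω | ξ n ω = 1} := fun n =>
    hmeas n (measurableSet_singleton (1:ℤ))
  have hD : ∀ n : ℕ, MeasurableSet {ω | ξ n ω = -1} := fun n =>
    hmeas n (measurableSet_singleton (-1:ℤ))
  -- the steps are ±1 almost surely
  have hnull : ∀ n : ℕ, P ({ω | ξ n ω = 1} ∪ {ω | ξ n ω = -1})ᶜ = 0 := by
    intro n
    have hdisj : Disjoint {ω | ξ n ω = 1} {ω | ξ n ω = -1} := by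
      rw [Set.disjoint_left]
      intro ω h1 h2
      simp only [Set.mem_setOf_eq] at h1 h2
      omega
    have hone : P ({ω | ξ n ω = 1} ∪ {ω | ξ n ω = -1}) = 1 := by
      rw [measure_union hdisj (hD n), hplus n, hminus n,
        ← ENNReal.ofReal_add (le_of_lt hp0) (le_of_lt hqpos)]
      norm_num
    rw [measure_compl ((hU n).union (hD n)) (measure_ne_top P _), hone]
    simp
  -- splitting a set according to the value of step n
  have hsplit : ∀ (n : ℕ) (B : Set Ω),
      P B = P (B ∩ {ω | ξ n ω = 1}) + P (B ∩ {ω | ξ n ω = -1}) := by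
    intro n B
    have h1 : P (B ∩ {ω | ξ n ω = 1}) + P (B \ {ω | ξ n ω = 1}) = P B :=
      measure_inter_add_diff B (hU n)
    have h2 : P ((B \ {ω | ξ n ω = 1}) ∩ {ω | ξ n ω = -1})
        + P ((B \ {ω | ξ n ω = 1}) \ {ω | ξ n ω = -1}) = P (B \ {ω | ξ n ω = 1}) :=
      measure_inter_add_diff _ (hD n)
    have h3 : (B \ {ω | ξ n ω = 1}) ∩ {ω | ξ n ω = -1} = B ∩ {ω | ξ n ω = -1} := by
      ext ω
      simp only [Set.mem_inter_iff, Set.mem_diff, Set.mem_setOf_eq]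
      constructor
      · rintro ⟨⟨hB, _⟩, hd⟩; exact ⟨hB, hd⟩
      · rintro ⟨hB, hd⟩; exact ⟨⟨hB, by omega⟩, hd⟩
    have h4 : P ((B \ {ω | ξ n ω = 1}) \ {ω | ξ n ω = -1}) = 0 := by
      refine le_antisymm (le_trans (measure_mono ?_) (le_of_eq (hnull n))) zero_le
      intro ω hω
      simp only [Set.mem_diff, Set.mem_setOf_eq] at hω
      simp only [Set.mem_compl_iff, Set.mem_union, Set.mem_setOf_eq]
      tauto
    rw [← h1, ← h2, h3, h4, add_zero]
  -- the event up to time n is independent of step n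
  have hcyl : ∀ (n : ℕ) (b c : ℤ),
      P ({ω | (∀ k ≤ n, 0 < X k ω ∧ X k ω < (L:ℤ)) ∧ X n ω = b} ∩ {ω | ξ n ω = c})
        = P {ω | (∀ k ≤ n, 0 < X k ω ∧ X k ω < (L:ℤ)) ∧ X n ω = b} * P {ω | ξ n ω = c} := by
    intro n b c
    have hST : Disjoint (Finset.range n) ({n} : Finset ℕ) := by
      simp only [Finset.disjoint_left, Finset.mem_range, Finset.mem_singleton]
      intro a ha
      omega
    have hIF := hindep.indepFun_finset (Finset.range n) {n} hST hmeas
    set W : ({x // x ∈ Finset.range n} → ℤ) → ℕ → ℤ :=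
      fun v k => ∑ i ∈ Finset.range k, if h : i ∈ Finset.range n then v ⟨i, h⟩ else 0 with hW
    set M : Set ({x // x ∈ Finset.range n} → ℤ) :=
      {v | (∀ k ≤ n, 0 < s0 + W v k ∧ s0 + W v k < (L:ℤ)) ∧ s0 + W v n = b} with hM
    set N : Set ({x // x ∈ ({n} : Finset ℕ)} → ℤ) :=
      {v | v ⟨n, Finset.mem_singleton_self n⟩ = c} with hN
    have hA : {ω | (∀ k ≤ n, 0 < X k ω ∧ X k ω < (L:ℤ)) ∧ X n ω = b}
        = (fun a (i : {x // x ∈ Finset.range n}) => ξ i a) ⁻¹' M := by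
      ext ω
      have hWX : ∀ k ≤ n, s0 + W (fun i : {x // x ∈ Finset.range n} => ξ i ω) k = X k ω := by
        intro k hk
        rw [hX k ω, hW]
        congr 1
        apply Finset.sum_congr rfl
        intro i hi
        rw [dif_pos (Finset.mem_range.mpr (lt_of_lt_of_le (Finset.mem_range.mp hi) hk))]
      simp only [Set.mem_setOf_eq, Set.mem_preimage, hM, Set.mem_setOf_eq]
      constructor
      · rintro ⟨h1, h2⟩
        exact ⟨fun k hk => by rw [hWX k hk]; exact h1 k hk, by rw [hWX n le_rfl]; exact h2⟩
      · rintro ⟨h1, h2⟩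
        exact ⟨fun k hk => by rw [← hWX k hk]; exact h1 k hk, by rw [← hWX n le_rfl]; exact h2⟩
    have hB : {ω | ξ n ω = c} = (fun a (i : {x // x ∈ ({n} : Finset ℕ)}) => ξ i a) ⁻¹' N := by
      ext ω; simp [hN]
    rw [hA, hB]
    exact hIF.measure_inter_preimage_eq_mul M N (Set.to_countable M).measurableSet
      (Set.to_countable N).measurableSet
  -- one-step recursion for the walk
  have hXs : ∀ (n : ℕ) (ω : Ω), X (n+1) ω = X n ω + ξ n ω := by
    intro n ω
    rw [hX, hX, Finset.sum_range_succ]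
    ring
  -- main induction
  have ind : ∀ (n : ℕ) (j : ℤ),
      P {ω | (∀ k ≤ n, 0 < X k ω ∧ X k ω < (L:ℤ)) ∧ X n ω = s0 + 2*j - n}
        = ENNReal.ofReal ((pc L s0 n j : ℝ) * p ^ j * (1-p) ^ ((n:ℤ) - j)) := by
    intro n
    induction n with
    | zero =>
      intro j
      rcases eq_or_ne j 0 with rfl | hj
      · have hset : {ω | (∀ k ≤ 0, 0 < X k ω ∧ X k ω < (L:ℤ)) ∧ X 0 ω = s0 + 2*0 - (0:ℕ)}
            = Set.univ := by
          ext ω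
          have hX0 : X 0 ω = s0 := by rw [hX]; simp
          simp only [Set.mem_setOf_eq, Set.mem_univ, iff_true, Nat.le_zero]
          constructor
          · intro k hk
            subst hk
            rw [hX0]
            exact ⟨hs0, hs0L⟩
          · rw [hX0]; push_cast; ring
        rw [hset]
        simp [pc_zero]
      · have hset : {ω | (∀ k ≤ 0, 0 < X k ω ∧ X k ω < (L:ℤ)) ∧ X 0 ω = s0 + 2*j - (0:ℕ)}
            = ∅ := by
          ext ω
          have hX0 : X 0 ω = s0 := by rw [hX]; simp
          simp only [Set.mem_setOf_eq, Set.mem_empty_iff_false, iff_false, not_and]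
          intro _
          rw [hX0]
          push_cast
          omega
        rw [hset]
        rw [pc_zero, if_neg hj]
        simp
    | succ n ih =>
      intro j
      by_cases hbi : 0 < s0 + 2*j - ((n:ℤ)+1) ∧ s0 + 2*j - ((n:ℤ)+1) < (L:ℤ)
      · -- interior case
        have e1 : {ω | (∀ k ≤ n+1, 0 < X k ω ∧ X k ω < (L:ℤ)) ∧ X (n+1) ω = s0 + 2*j - (↑(n+1):ℤ)}
              ∩ {ω | ξ n ω = 1}
            = {ω | (∀ k ≤ n, 0 < X k ω ∧ X k ω < (L:ℤ)) ∧ X n ω = s0 + 2*(j-1) - (n:ℤ)}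
              ∩ {ω | ξ n ω = 1} := by
          ext ω
          simp only [Set.mem_inter_iff, Set.mem_setOf_eq]
          constructor
          · rintro ⟨⟨h1, h2⟩, hu⟩
            refine ⟨⟨fun k hk => h1 k (by omega), ?_⟩, hu⟩
            have := hXs n ω
            push_cast at h2 ⊢
            omega
          · rintro ⟨⟨h1, h2⟩, hu⟩
            have hx1 : X (n+1) ω = s0 + 2*j - ((n:ℤ)+1) := by
              have := hXs n ω
              omega
            refine ⟨⟨fun k hk => ?_, by push_cast; omega⟩, hu⟩
            rcases Nat.lt_succ_iff_lt_or_eq.mp (Nat.lt_succ_of_le hk) with h | h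
            · exact h1 k (by omega)
            · subst h
              rw [hx1]
              exact hbi
        have e2 : {ω | (∀ k ≤ n+1, 0 < X k ω ∧ X k ω < (L:ℤ)) ∧ X (n+1) ω = s0 + 2*j - (↑(n+1):ℤ)}
              ∩ {ω | ξ n ω = -1}
            = {ω | (∀ k ≤ n, 0 < X k ω ∧ X k ω < (L:ℤ)) ∧ X n ω = s0 + 2*j - (n:ℤ)}
              ∩ {ω | ξ n ω = -1} := by
          ext ω
          simp only [Set.mem_inter_iff, Set.mem_setOf_eq]
          constructor
          · rintro ⟨⟨h1, h2⟩, hu⟩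
            refine ⟨⟨fun k hk => h1 k (by omega), ?_⟩, hu⟩
            have := hXs n ω
            push_cast at h2 ⊢
            omega
          · rintro ⟨⟨h1, h2⟩, hu⟩
            have hx1 : X (n+1) ω = s0 + 2*j - ((n:ℤ)+1) := by
              have := hXs n ω
              omega
            refine ⟨⟨fun k hk => ?_, by push_cast; omega⟩, hu⟩
            rcases Nat.lt_succ_iff_lt_or_eq.mp (Nat.lt_succ_of_le hk) with h | h
            · exact h1 k (by omega)
            · subst h
              rw [hx1]
              exact hbi
        rw [hsplit n _, e1, e2, hcyl n (s0 + 2*(j-1) - (n:ℤ)) 1, hcyl n (s0 + 2*j - (n:ℤ)) (-1),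
          ih (j-1), ih j, hplus n, hminus n]
        rw [← ENNReal.ofReal_mul (by positivity), ← ENNReal.ofReal_mul (by positivity),
          ← ENNReal.ofReal_add (by positivity) (by positivity)]
        congr 1
        rw [pc_succ, if_pos hbi]
        have ha : p ^ (j - 1) * p = p ^ j := by
          rw [← zpow_add_one₀ hpne]
          congr 1
          ring
        have hb2 : (1 - p) ^ ((n:ℤ) - j) * (1 - p) = (1 - p) ^ (((n:ℤ)+1) - j) := by
          rw [← zpow_add_one₀ hqne]
          congr 1
          ring
        have hc : (1 - p) ^ ((n:ℤ) - (j - 1)) = (1 - p) ^ (((n:ℤ)+1) - j) := by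
          congr 1
          ring
        push_cast
        rw [hc]
        linear_combination ((pc L s0 n (j-1) : ℝ)) * (1-p) ^ (((n:ℤ)+1) - j) * ha
          + ((pc L s0 n j : ℝ)) * p ^ j * hb2
      · -- boundary case: the event is empty
        have hset : {ω | (∀ k ≤ n+1, 0 < X k ω ∧ X k ω < (L:ℤ)) ∧ X (n+1) ω = s0 + 2*j - (↑(n+1):ℤ)}
            = ∅ := by
          ext ω
          simp only [Set.mem_setOf_eq, Set.mem_empty_iff_false, iff_false, not_and]
          intro h1 h2
          have := h1 (n+1) le_rfl
          push_cast at h2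
          omega
        rw [hset]
        rw [pc_succ, if_neg hbi]
        simp
  -- final assembly
  obtain ⟨m, rfl⟩ : ∃ m, t = m + 1 := ⟨t - 1, by omega⟩
  have htsub : (m + 1 - 1 : ℕ) = m := rfl
  rcases hs with rfl | rfl
  · -- s = 0
    have hrr' : r' = r := by rw [hr', if_pos rfl]
    have h2r : s0 + 2*r' - (m:ℤ) = 1 := by
      subst hrr'
      push_cast at hr hpar ⊢
      omega
    have e1 : {ω | (∀ k < m+1, 0 < X k ω ∧ X k ω < (L:ℤ)) ∧ X (m+1) ω = (0:ℤ)}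
          ∩ {ω | ξ m ω = 1}
        = {ω | (∀ k ≤ m, 0 < X k ω ∧ X k ω < (L:ℤ)) ∧ X m ω = (-1:ℤ)}
          ∩ {ω | ξ m ω = 1} := by
      ext ω
      simp only [Set.mem_inter_iff, Set.mem_setOf_eq, Nat.lt_succ_iff]
      constructor
      · rintro ⟨⟨h1, h2⟩, hu⟩
        have := hXs m ω
        exact ⟨⟨h1, by omega⟩, hu⟩
      · rintro ⟨⟨h1, h2⟩, hu⟩
        have := hXs m ω
        exact ⟨⟨h1, by omega⟩, hu⟩
    have e2 : {ω | (∀ k < m+1, 0 < X k ω ∧ X k ω < (L:ℤ)) ∧ X (m+1) ω = (0:ℤ)}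
          ∩ {ω | ξ m ω = -1}
        = {ω | (∀ k ≤ m, 0 < X k ω ∧ X k ω < (L:ℤ)) ∧ X m ω = s0 + 2*r' - (m:ℤ)}
          ∩ {ω | ξ m ω = -1} := by
      ext ω
      simp only [Set.mem_inter_iff, Set.mem_setOf_eq, Nat.lt_succ_iff]
      constructor
      · rintro ⟨⟨h1, h2⟩, hu⟩
        have := hXs m ω
        exact ⟨⟨h1, by omega⟩, hu⟩
      · rintro ⟨⟨h1, h2⟩, hu⟩
        have := hXs m ω
        exact ⟨⟨h1, by omega⟩, hu⟩
    have hempty : {ω | (∀ k ≤ m, 0 < X k ω ∧ X k ω < (L:ℤ)) ∧ X m ω = (-1:ℤ)} = ∅ := by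
      ext ω
      simp only [Set.mem_setOf_eq, Set.mem_empty_iff_false, iff_false, not_and]
      intro h1 h2
      have := (h1 m le_rfl).1
      omega
    rw [hsplit m _, e1, e2, hempty, hcyl m (s0 + 2*r' - (m:ℤ)) (-1), ind m r', hminus m]
    simp only [Set.empty_inter, measure_empty, zero_add]
    rw [← ENNReal.ofReal_mul (by positivity)]
    congr 1
    have hFim : (pc L s0 m r' : ℝ) = Fim L s0 m r' :=
      pc_eq_Fim L hL s0 hs0 hs0L m r' (by omega) (by omega)
    have hq2 : (1 - p) ^ ((m:ℤ) - r') * (1 - p) = (1 - p) ^ (((m:ℤ)+1) - r') := by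
      rw [← zpow_add_one₀ hqne]
      congr 1
      ring
    rw [htsub]
    unfold Fim at hFim
    rw [← hFim]
    subst hrr'
    push_cast
    linear_combination ((pc L s0 m r' : ℝ)) * p ^ r' * hq2
  · -- s = L
    have hrr' : r' = r - 1 := by
      rw [hr', if_neg (by omega)]
    have h2r : s0 + 2*r' - (m:ℤ) = (L:ℤ) - 1 := by
      subst hrr'
      push_cast at hr hpar ⊢
      omega
    have e1 : {ω | (∀ k < m+1, 0 < X k ω ∧ X k ω < (L:ℤ)) ∧ X (m+1) ω = (L:ℤ)}
          ∩ {ω | ξ m ω = 1}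
        = {ω | (∀ k ≤ m, 0 < X k ω ∧ X k ω < (L:ℤ)) ∧ X m ω = s0 + 2*r' - (m:ℤ)}
          ∩ {ω | ξ m ω = 1} := by
      ext ω
      simp only [Set.mem_inter_iff, Set.mem_setOf_eq, Nat.lt_succ_iff]
      constructor
      · rintro ⟨⟨h1, h2⟩, hu⟩
        have := hXs m ω
        exact ⟨⟨h1, by omega⟩, hu⟩
      · rintro ⟨⟨h1, h2⟩, hu⟩
        have := hXs m ω
        exact ⟨⟨h1, by omega⟩, hu⟩
    have e2 : {ω | (∀ k < m+1, 0 < X k ω ∧ X k ω < (L:ℤ)) ∧ X (m+1) ω = (L:ℤ)}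
          ∩ {ω | ξ m ω = -1}
        = {ω | (∀ k ≤ m, 0 < X k ω ∧ X k ω < (L:ℤ)) ∧ X m ω = (L:ℤ) + 1}
          ∩ {ω | ξ m ω = -1} := by
      ext ω
      simp only [Set.mem_inter_iff, Set.mem_setOf_eq, Nat.lt_succ_iff]
      constructor
      · rintro ⟨⟨h1, h2⟩, hu⟩
        have := hXs m ω
        exact ⟨⟨h1, by omega⟩, hu⟩
      · rintro ⟨⟨h1, h2⟩, hu⟩
        have := hXs m ω
        exact ⟨⟨h1, by omega⟩, hu⟩
    have hempty : {ω | (∀ k ≤ m, 0 < X k ω ∧ X k ω < (L:ℤ)) ∧ X m ω = (L:ℤ) + 1} = ∅ := by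
      ext ω
      simp only [Set.mem_setOf_eq, Set.mem_empty_iff_false, iff_false, not_and]
      intro h1 h2
      have := (h1 m le_rfl).2
      omega
    rw [hsplit m _, e1, e2, hempty, hcyl m (s0 + 2*r' - (m:ℤ)) 1, ind m r', hplus m]
    simp only [Set.empty_inter, measure_empty, add_zero]
    rw [← ENNReal.ofReal_mul (by positivity)]
    congr 1
    have hFim : (pc L s0 m r' : ℝ) = Fim L s0 m r' :=
      pc_eq_Fim L hL s0 hs0 hs0L m r' (by omega) (by omega)
    have hp2 : p ^ ((r':ℤ)) * p = p ^ (r' + 1) := by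
      rw [← zpow_add_one₀ hpne]
    have hrr : r' + 1 = r := by omega
    rw [htsub]
    unfold Fim at hFim
    rw [← hFim]
    have hq3 : ((m:ℤ)) - r' = ((m:ℤ)+1) - r := by omega
    push_cast
    rw [hq3]
    have hp2' : p ^ (r' : ℤ) * p = p ^ r := by rw [hp2, hrr]
    linear_combination ((pc L s0 m r' : ℝ)) * (1-p) ^ (((m:ℤ)+1) - r) * hp2'
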